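/- Let Γ be a totally ordered abelian group, S = Γ_{≥0} its submonoid of nonnegative elements, K a field, and D = K[x^S] the semigroup algebra of S over K. Then R(D) = { f/g : f, g ∈ D, g ≠ 0, deg(f) ≤ deg(g) }, where deg(f) is the largest s ∈ S with nonzero coefficient in f, and this set is a ring. -/

import Mathlib

noncomputable def recip (D : Type*) [CommRing D] [IsDomain D] : Subring (FractionRing D) :=
  Subring.closure {x | ∃ d : D, d ≠ 0 ∧ x = (algebraMap D (FractionRing D) d)⁻¹}

instance semigroupAlgebraIsDomain (Γ : Type*) [AddCommGroup Γ] [LinearOrder Γ] [IsOrderedAddMonoid Γ]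
    (K : Type*) [Field K] : IsDomain (AddMonoidAlgebra K {x : Γ // 0 ≤ x}) :=
  NoZeroDivisors.to_isDomain _

/-- The degree of an element of the semigroup algebra `K[x^S]`, `S = Γ₊`, as an element
of `WithBot S` (so `deg 0 = ⊥ = -∞`). -/
def sdeg {Γ : Type*} [AddCommGroup Γ] [LinearOrder Γ] [IsOrderedAddMonoid Γ] {K : Type*} [Field K]
    (f : AddMonoidAlgebra K {x : Γ // 0 ≤ x}) : WithBot {x : Γ // 0 ≤ x} :=
  f.coeff.support.max

set_option maxHeartbeats 1000000 in
section
namespace Stmt5Aux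
set_option synthInstance.maxHeartbeats 400000
set_option maxHeartbeats 1000000

open AddMonoidAlgebra

variable {Γ : Type*} [AddCommGroup Γ] [LinearOrder Γ] [IsOrderedAddMonoid Γ] {K : Type*} [Field K]

local notation "𝕊" => {x : Γ // 0 ≤ x}
local notation "𝔻" => AddMonoidAlgebra K {x : Γ // 0 ≤ x}
local notation "𝔽" => FractionRing (AddMonoidAlgebra K {x : Γ // 0 ≤ x})
local notation "φ" => algebraMap (AddMonoidAlgebra K {x : Γ // 0 ≤ x})
  (FractionRing (AddMonoidAlgebra K {x : Γ // 0 ≤ x}))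

theorem phi_inj : Function.Injective (φ) := IsFractionRing.injective _ _

theorem phi_ne_zero {d : 𝔻} (hd : d ≠ 0) : (φ) d ≠ 0 :=
  fun h => hd (phi_inj (by rw [h, map_zero]))

theorem sdeg_zero' : sdeg (0 : 𝔻) = ⊥ := by
  simp [sdeg]

theorem sdeg_eq_supDegree {f : 𝔻} (hf : f ≠ 0) :
    sdeg f = ↑(AddMonoidAlgebra.supDegree (id : 𝕊 → 𝕊) f) := by
  have hs : f.coeff.support.Nonempty := Finsupp.support_nonempty_iff.mpr (AddMonoidAlgebra.coeff_eq_zero.not.mpr hf)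
  rw [sdeg, Finset.max_eq_sup_coe,
    ← AddMonoidAlgebra.supDegree_withBot_some_comp (D := (id : 𝕊 → 𝕊)) hs]
  rfl

theorem sdeg_mul (f g : 𝔻) : sdeg (f * g) = sdeg f + sdeg g := by
  rcases eq_or_ne f 0 with rfl | hf
  · rw [zero_mul, sdeg_zero', WithBot.bot_add]
  rcases eq_or_ne g 0 with rfl | hg
  · rw [mul_zero, sdeg_zero', WithBot.add_bot]
  have hD : Function.Injective (id : 𝕊 → 𝕊) := fun a b h => h
  have hadd : ∀ a b : 𝕊, (id : 𝕊 → 𝕊) (a + b) = id a + id b := fun _ _ => rfl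
  have hlc : AddMonoidAlgebra.leadingCoeff (id : 𝕊 → 𝕊) f *
      AddMonoidAlgebra.leadingCoeff (id : 𝕊 → 𝕊) g ≠ 0 :=
    mul_ne_zero ((AddMonoidAlgebra.leadingCoeff_ne_zero hD).mpr hf)
      ((AddMonoidAlgebra.leadingCoeff_ne_zero hD).mpr hg)
  have hmul := AddMonoidAlgebra.supDegree_mul hD hadd hlc hf hg
  rw [sdeg_eq_supDegree (mul_ne_zero hf hg), sdeg_eq_supDegree hf, sdeg_eq_supDegree hg, ← WithBot.coe_add]
  exact congrArg _ hmul

theorem sdeg_add_le (f g : 𝔻) : sdeg (f + g) ≤ max (sdeg f) (sdeg g) := by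
  rw [sdeg, sdeg, sdeg]
  refine le_trans (Finset.max_mono (Finsupp.support_add)) ?_
  convert (Finset.max_union (s := f.coeff.support) (t := g.coeff.support)).le using 2 <;> rfl

theorem sdeg_single {a : 𝕊} {c : K} (hc : c ≠ 0) : sdeg (single a c : 𝔻) = ↑a := by
  rw [sdeg, AddMonoidAlgebra.coeff_single, Finsupp.support_single_ne_zero a hc, Finset.max_singleton]

theorem sdeg_one : sdeg (1 : 𝔻) = ↑(0 : 𝕊) := by
  rw [AddMonoidAlgebra.one_def]; exact sdeg_single one_ne_zero

theorem zero_le_sdeg {g : 𝔻} (hg : g ≠ 0) : ↑(0 : 𝕊) ≤ sdeg g := by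
  obtain ⟨u, hu⟩ := Finsupp.support_nonempty_iff.mpr (AddMonoidAlgebra.coeff_eq_zero.not.mpr hg)
  have h0u : (0 : 𝕊) ≤ u := Subtype.coe_le_coe.mp (by simpa using u.2)
  exact le_trans (WithBot.coe_le_coe.mpr h0u) (Finset.le_max hu)

theorem gen_mem {d : 𝔻} (hd : d ≠ 0) : ((φ) d)⁻¹ ∈ recip (𝔻) :=
  Subring.subset_closure ⟨d, hd, rfl⟩

theorem const_mem (c : K) : (φ) (single 0 c) ∈ recip (𝔻) := by
  rcases eq_or_ne c 0 with rfl | hc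
  · rw [AddMonoidAlgebra.single_zero, map_zero]; exact zero_mem _
  · have h1 : (φ) (single 0 c) * (φ) (single 0 c⁻¹) = 1 := by
      rw [← map_mul, AddMonoidAlgebra.single_mul_single, add_zero, mul_inv_cancel₀ hc,
        ← AddMonoidAlgebra.one_def, map_one]
    have h2 : (φ) (single 0 c) = ((φ) (single 0 c⁻¹))⁻¹ :=
      eq_inv_of_mul_eq_one_left h1
    rw [h2]
    exact gen_mem (by simp [hc])


theorem step (n : ℕ)
    (IH : ∀ g : 𝔻, g ≠ 0 → g.coeff.support.card ≤ n → ∀ s : 𝕊, (↑s ≤ sdeg g) →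
      (φ) (single s 1) * ((φ) g)⁻¹ ∈ recip (𝔻))
    (g : 𝔻) (hg : g ≠ 0) (hcard : g.coeff.support.card ≤ n + 1) (h0 : (0 : 𝕊) ∈ g.coeff.support)
    (s : 𝕊) (hs : (↑s : WithBot 𝕊) ≤ sdeg g) :
    (φ) (single s 1) * ((φ) g)⁻¹ ∈ recip (𝔻) := by
  classical
  have hc₀ : g.coeff 0 ≠ 0 := Finsupp.mem_support_iff.mp h0
  set h : 𝔻 := AddMonoidAlgebra.erase 0 g with hh_def
  have hsum : h + single 0 (g.coeff 0) = g := AddMonoidAlgebra.erase_add_single 0 g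
  by_cases hh : h = 0
  · have hgs : g = single 0 (g.coeff 0) := by
      have h6 := hsum
      rw [hh, zero_add] at h6
      exact h6.symm
    have hdeg : sdeg g = ↑(0 : 𝕊) := by rw [hgs]; exact sdeg_single hc₀
    have hs0 : s = 0 := le_antisymm (WithBot.coe_le_coe.mp (hdeg ▸ hs))
      (Subtype.coe_le_coe.mp (by simpa using s.2))
    rw [hs0, ← AddMonoidAlgebra.one_def, map_one, one_mul]
    exact gen_mem hg
  · have hsupp : h.coeff.support = g.coeff.support.erase 0 := Finsupp.support_erase
    have hcard' : h.coeff.support.card ≤ n := by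
      rw [hsupp]
      have := Finset.card_erase_of_mem h0
      omega
    have hdeg_h : sdeg h = sdeg g := by
      apply le_antisymm
      · exact Finset.max_mono (by rw [hsupp]; exact Finset.erase_subset _ _)
      · have hne : g.coeff.support.Nonempty := Finsupp.support_nonempty_iff.mpr (AddMonoidAlgebra.coeff_eq_zero.not.mpr hg)
        set u := g.coeff.support.max' hne with hu_def
        have humem : u ∈ g.coeff.support := Finset.max'_mem _ _
        have hsdegg : sdeg g = ↑u := (Finset.coe_max' hne).symm
        have hune : u ≠ 0 := by
          intro hu0
          apply hh
          have hsub : g.coeff.support ⊆ {0} := by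
            intro v hv
            have h1 : v ≤ u := Finset.le_max' _ _ hv
            have h2 : (0 : 𝕊) ≤ v := Subtype.coe_le_coe.mp (by simpa using v.2)
            rw [Finset.mem_singleton]
            exact le_antisymm (hu0 ▸ h1) h2
          have : h.coeff.support = ∅ := by
            rw [hsupp]
            exact Finset.eq_empty_of_forall_notMem fun v hv => by
              rcases Finset.mem_erase.mp hv with ⟨hv1, hv2⟩
              exact hv1 (Finset.mem_singleton.mp (hsub hv2))
          exact AddMonoidAlgebra.coeff_eq_zero.mp (Finsupp.support_eq_empty.mp this)
        have humem' : u ∈ h.coeff.support := by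
          rw [hsupp]; exact Finset.mem_erase.mpr ⟨hune, humem⟩
        rw [hsdegg]
        exact Finset.le_max humem'
    have hφh : (φ) h ≠ 0 := phi_ne_zero hh
    have hφg : (φ) g ≠ 0 := phi_ne_zero hg
    have hmem1 := IH h hh hcard' s (by rw [hdeg_h]; exact hs)
    have hmem2 : (1 : 𝔽) - (φ) (single 0 (g.coeff 0)) * ((φ) g)⁻¹ ∈ recip (𝔻) :=
      sub_mem (one_mem _) (mul_mem (const_mem _) (gen_mem hg))
    have hHG : (φ) h + (φ) (single 0 (g.coeff 0)) = (φ) g := by rw [← map_add, hsum]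
    have h3 : (φ) h * ((φ) g)⁻¹ + (φ) (single 0 (g.coeff 0)) * ((φ) g)⁻¹ = 1 := by
      rw [← add_mul, hHG, mul_inv_cancel₀ hφg]
    have h4 : (1 : 𝔽) - (φ) (single 0 (g.coeff 0)) * ((φ) g)⁻¹ = (φ) h * ((φ) g)⁻¹ :=
      sub_eq_iff_eq_add.mpr h3.symm
    have key : (φ) (single s 1) * ((φ) g)⁻¹ =
        ((φ) (single s 1) * ((φ) h)⁻¹) * (1 - (φ) (single 0 (g.coeff 0)) * ((φ) g)⁻¹) := by
      rw [h4, mul_assoc, ← mul_assoc (((φ) h)⁻¹), inv_mul_cancel₀ hφh, one_mul]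
    rw [key]
    exact mul_mem hmem1 hmem2

theorem monomial_div_mem (n : ℕ) : ∀ g : 𝔻, g ≠ 0 → g.coeff.support.card ≤ n →
    ∀ s : 𝕊, (↑s : WithBot 𝕊) ≤ sdeg g → (φ) (single s 1) * ((φ) g)⁻¹ ∈ recip (𝔻) := by
  induction n with
  | zero =>
    intro g hg hcard s _
    exact absurd (AddMonoidAlgebra.coeff_eq_zero.mp (Finsupp.support_eq_empty.mp
      (Finset.card_eq_zero.mp (Nat.le_zero.mp hcard)))) hg
  | succ n IH =>
    intro g hg hcard s hs
    have hne : g.coeff.support.Nonempty := Finsupp.support_nonempty_iff.mpr (AddMonoidAlgebra.coeff_eq_zero.not.mpr hg)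
    set s₀ : 𝕊 := g.coeff.support.min' hne with hs₀def
    have hs₀mem : s₀ ∈ g.coeff.support := g.coeff.support.min'_mem hne
    have hmod : AddMonoidAlgebra.modOf g s₀ = 0 := by
      refine AddMonoidAlgebra.ext (Finsupp.ext fun u => ?_)
      by_cases hex : ∃ d, u = s₀ + d
      · rw [AddMonoidAlgebra.modOf_apply_of_exists_add _ _ _ hex]; rfl
      · rw [AddMonoidAlgebra.modOf_apply_of_not_exists_add _ _ _ hex]
        by_contra hne0
        have humem : u ∈ g.coeff.support := Finsupp.mem_support_iff.mpr (by
          intro h0; exact hne0 (by rw [h0]; rfl))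
        have hle : s₀ ≤ u := g.coeff.support.min'_le u humem
        exact hex ⟨⟨u.1 - s₀.1, sub_nonneg.mpr (Subtype.coe_le_coe.mpr hle)⟩,
          Subtype.ext (by simp)⟩
    set g1 : 𝔻 := AddMonoidAlgebra.divOf g s₀ with hg1def
    have hfac : single s₀ (1 : K) * g1 = g := by
      have h5 := AddMonoidAlgebra.divOf_add_modOf g s₀
      rw [hmod, add_zero] at h5
      exact h5
    have hg1 : g1 ≠ 0 := fun h0 => hg (by rw [← hfac, h0, mul_zero])
    have hφg1 : (φ) g1 ≠ 0 := phi_ne_zero hg1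
    rcases le_total s s₀ with hle | hge
    · set t : 𝕊 := ⟨s₀.1 - s.1, sub_nonneg.mpr (Subtype.coe_le_coe.mpr hle)⟩ with ht_def
      have hst : s + t = s₀ := Subtype.ext (by simp [ht_def])
      have hfac2 : single s (1 : K) * (single t 1 * g1) = g := by
        rw [← mul_assoc, AddMonoidAlgebra.single_mul_single, one_mul, hst, hfac]
      have hnz : single t (1 : K) * g1 ≠ 0 :=
        mul_ne_zero (by simp) hg1
      have heq : (φ) (single s 1) * ((φ) g)⁻¹ = ((φ) (single t 1 * g1))⁻¹ := by
        rw [← hfac2, map_mul, mul_inv, ← mul_assoc,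
          mul_inv_cancel₀ (phi_ne_zero (show single s (1:K) ≠ 0 by simp)), one_mul]
      rw [heq]
      exact gen_mem hnz
    · set s' : 𝕊 := ⟨s.1 - s₀.1, sub_nonneg.mpr (Subtype.coe_le_coe.mpr hge)⟩ with hs'def
      have hss' : s₀ + s' = s := Subtype.ext (by simp [hs'def])
      have h0g1 : (0 : 𝕊) ∈ g1.coeff.support := by
        rw [Finsupp.mem_support_iff]
        show g.coeff (s₀ + 0) ≠ 0
        rw [add_zero]
        exact Finsupp.mem_support_iff.mp hs₀mem
      have hcardg1 : g1.coeff.support.card ≤ n + 1 := by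
        refine le_trans (Finset.card_le_card_of_injOn (fun u => s₀ + u) ?_ ?_) hcard
        · intro u hu
          rw [Finset.mem_coe, Finsupp.mem_support_iff] at hu ⊢
          exact hu
        · exact fun a _ b _ hab => add_left_cancel hab
      have hsdegg1 : (↑s' : WithBot 𝕊) ≤ sdeg g1 := by
        set u := g.coeff.support.max' hne with hu_def
        have humem : u ∈ g.coeff.support := Finset.max'_mem _ _
        have hsdegg : sdeg g = ↑u := (Finset.coe_max' hne).symm
        have hsu : s ≤ u := WithBot.coe_le_coe.mp (hsdegg ▸ hs)
        have hs₀u : s₀ ≤ u := g.coeff.support.min'_le u humem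
        set u' : 𝕊 := ⟨u.1 - s₀.1, sub_nonneg.mpr (Subtype.coe_le_coe.mpr hs₀u)⟩ with hu'_def
        have hu'mem : u' ∈ g1.coeff.support := by
          rw [Finsupp.mem_support_iff]
          show g.coeff (s₀ + u') ≠ 0
          have : s₀ + u' = u := Subtype.ext (by simp [hu'_def])
          rw [this]
          exact Finsupp.mem_support_iff.mp humem
        refine le_trans (WithBot.coe_le_coe.mpr ?_) (Finset.le_max hu'mem)
        exact Subtype.mk_le_mk.mpr (sub_le_sub_right (Subtype.coe_le_coe.mpr hsu) _)
      have hsingle : single s (1 : K) = single s₀ 1 * single s' 1 := by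
        rw [AddMonoidAlgebra.single_mul_single, one_mul, hss']
      have hP : (φ) (single s₀ (1:K)) ≠ 0 := phi_ne_zero (by simp)
      have heq : (φ) (single s 1) * ((φ) g)⁻¹ = (φ) (single s' 1) * ((φ) g1)⁻¹ := by
        rw [hsingle, ← hfac, map_mul, map_mul, mul_inv, mul_mul_mul_comm,
          mul_inv_cancel₀ hP, one_mul]
      rw [heq]
      exact step n IH g1 hg1 hcardg1 h0g1 s' hsdegg1


theorem sdeg_neg (f : 𝔻) : sdeg (-f) = sdeg f := by
  rw [sdeg, sdeg, AddMonoidAlgebra.coeff_neg, Finsupp.support_neg]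

theorem frac_mem {f g : 𝔻} (hg : g ≠ 0) (hdeg : sdeg f ≤ sdeg g) :
    (φ) f * ((φ) g)⁻¹ ∈ recip (𝔻) := by
  classical
  have hf : (φ) f = ∑ u ∈ f.coeff.support, (φ) (single u (f.coeff u)) := by
    calc (φ) f = (φ) (f.coeff.sum single) := by rw [AddMonoidAlgebra.sum_coeff_single]
    _ = ∑ u ∈ f.coeff.support, (φ) (single u (f.coeff u)) := map_sum _ _ _
  rw [hf, Finset.sum_mul]
  refine Subring.sum_mem _ fun u hu => ?_
  have h1 : single u (f.coeff u) = single 0 (f.coeff u) * single u (1 : K) := by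
    rw [AddMonoidAlgebra.single_mul_single, zero_add, mul_one]
  rw [h1, map_mul, mul_assoc]
  refine mul_mem (const_mem _) ?_
  refine monomial_div_mem g.coeff.support.card g hg le_rfl u (le_trans ?_ hdeg)
  exact Finset.le_max hu

end Stmt5Aux
end

set_option maxHeartbeats 1000000 in
set_option synthInstance.maxHeartbeats 400000 in
/-- For the semigroup algebra `D = K[x^S]` on the nonnegative part `S`
of a totally ordered abelian group `Γ`, `R(D)` equals the set of fractions `f/g` with
`g ≠ 0` and `deg f ≤ deg g` (and in particular this set is a ring, being the subring
`R(D)`). -/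
theorem stmt_5 (Γ : Type*) [AddCommGroup Γ] [LinearOrder Γ] [IsOrderedAddMonoid Γ] (K : Type*) [Field K] :
    letI D := AddMonoidAlgebra K {x : Γ // 0 ≤ x}
    (recip D : Set (FractionRing D)) =
      {x | ∃ f g : D, g ≠ 0 ∧ sdeg f ≤ sdeg g ∧
        x = algebraMap D (FractionRing D) f / algebraMap D (FractionRing D) g} := by
  ext x
  simp only [Set.mem_setOf_eq, SetLike.mem_coe]
  constructor
  · intro hx
    refine Subring.closure_induction
      (p := fun y _ => ∃ f g : AddMonoidAlgebra K {x : Γ // 0 ≤ x}, g ≠ 0 ∧ sdeg f ≤ sdeg g ∧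
        y = algebraMap _ (FractionRing (AddMonoidAlgebra K {x : Γ // 0 ≤ x})) f /
          algebraMap _ (FractionRing (AddMonoidAlgebra K {x : Γ // 0 ≤ x})) g)
      ?_ ?_ ?_ ?_ ?_ ?_ hx
    · rintro y ⟨d, hd, rfl⟩
      refine ⟨1, d, hd, ?_, ?_⟩
      · rw [Stmt5Aux.sdeg_one]
        exact Stmt5Aux.zero_le_sdeg hd
      · rw [map_one, one_div]
    · exact ⟨0, 1, one_ne_zero, by rw [Stmt5Aux.sdeg_zero']; exact bot_le,
        by rw [map_zero, zero_div]⟩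
    · exact ⟨1, 1, one_ne_zero, le_rfl, by rw [map_one, div_one]⟩
    · rintro x y _ _ ⟨f₁, g₁, hg₁, hd₁, rfl⟩ ⟨f₂, g₂, hg₂, hd₂, rfl⟩
      refine ⟨f₁ * g₂ + f₂ * g₁, g₁ * g₂, mul_ne_zero hg₁ hg₂, ?_, ?_⟩
      · refine le_trans (Stmt5Aux.sdeg_add_le _ _) ?_
        rw [Stmt5Aux.sdeg_mul, Stmt5Aux.sdeg_mul, Stmt5Aux.sdeg_mul]
        refine max_le (add_le_add hd₁ le_rfl) ?_
        rw [add_comm (sdeg g₁)]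
        exact add_le_add hd₂ le_rfl
      · rw [map_add, map_mul, map_mul, map_mul,
          div_add_div _ _ (Stmt5Aux.phi_ne_zero hg₁) (Stmt5Aux.phi_ne_zero hg₂)]
        ring
    · rintro x _ ⟨f, g, hg, hd, rfl⟩
      exact ⟨-f, g, hg, by rw [Stmt5Aux.sdeg_neg]; exact hd, by rw [map_neg, neg_div]⟩
    · rintro x y _ _ ⟨f₁, g₁, hg₁, hd₁, rfl⟩ ⟨f₂, g₂, hg₂, hd₂, rfl⟩
      refine ⟨f₁ * f₂, g₁ * g₂, mul_ne_zero hg₁ hg₂, ?_, ?_⟩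
      · rw [Stmt5Aux.sdeg_mul, Stmt5Aux.sdeg_mul]
        exact add_le_add hd₁ hd₂
      · rw [map_mul, map_mul, div_mul_div_comm]
  · rintro ⟨f, g, hg, hdeg, rfl⟩
    rw [div_eq_mul_inv]
    exact Stmt5Aux.frac_mem hg hdeg
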